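/- Let ψ : U ⊆ ℝ^n → ℝ^ν be a C² immersion (chart of the submanifold), c : I → U a C¹ curve, γ = ψ ∘ c, and v(t) = Σᵢ ∂ᵢψ(c(t))·wᵢ(t) a vector field of tangent vectors along γ with w : I → ℝ^n differentiable. Then v'(t) is orthogonal to T_{γ(t)}M = span{∂ᵢψ(c(t))} for all t if and only if for all i and t: wᵢ'(t) + Σ_{k,ℓ} Γ^i_{kℓ}(c(t))·c_k'(t)·w_ℓ(t) = 0, where Γ^i_{jk}(x) = Σ_ℓ ĝ^{iℓ}(x)·⟨∂_ℓψ(x), ∂_j∂_kψ(x)⟩ and ĝ^{iℓ} is the inverse of the metric matrix g_{ij}(x) = ⟨∂ᵢψ(x), ∂_jψ(x)⟩. -/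

import Mathlib

open scoped RealInnerProductSpace

/-- In a chart `ψ`, a tangent field `v(t) = Σᵢ wᵢ(t)·∂ᵢψ(c(t))` along
`γ = ψ ∘ c` has derivative orthogonal to the tangent space
`span{∂ᵢψ(c(t))}` iff `wᵢ' + Σ_{k,ℓ} Γ^i_{kℓ}(c)·c_k'·w_ℓ = 0`
(vanishing covariant derivative in local coordinates). -/
theorem parallel_field_in_chart {ν n : ℕ}
    (U : Set (Fin n → ℝ)) (hU : IsOpen U)
    (ψ : (Fin n → ℝ) → EuclideanSpace ℝ (Fin ν)) (hψ : ContDiff ℝ 2 ψ)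
    (Dψ : (Fin n → ℝ) → Fin n → EuclideanSpace ℝ (Fin ν))
    (hD : ∀ x i, Dψ x i = fderiv ℝ ψ x (Pi.single i 1))
    (D2ψ : (Fin n → ℝ) → Fin n → Fin n → EuclideanSpace ℝ (Fin ν))
    (hD2 : ∀ x j k, D2ψ x j k =
      fderiv ℝ (fun y => fderiv ℝ ψ y (Pi.single k 1)) x (Pi.single j 1))
    (himm : ∀ x ∈ U, LinearIndependent ℝ (Dψ x))
    (g ginv : (Fin n → ℝ) → Matrix (Fin n) (Fin n) ℝ)
    (hg : ∀ x i j, g x i j = ⟪Dψ x i, Dψ x j⟫)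
    (hginv : ∀ x ∈ U, g x * ginv x = 1 ∧ ginv x * g x = 1)
    (Γ : (Fin n → ℝ) → Fin n → Fin n → Fin n → ℝ)
    (hΓ : ∀ x i j k, Γ x i j k = ∑ l, ginv x i l * ⟪Dψ x l, D2ψ x j k⟫)
    (I : Set ℝ) (hIopen : IsOpen I) (hIconn : I.OrdConnected)
    (c : ℝ → (Fin n → ℝ)) (hc : ContDiff ℝ 1 c) (hcU : ∀ t ∈ I, c t ∈ U)
    (w : Fin n → ℝ → ℝ) (hw : ∀ i, Differentiable ℝ (w i)) :
    (∀ t ∈ I, ∀ z ∈ Submodule.span ℝ (Set.range (Dψ (c t))),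
        ⟪deriv (fun u => ∑ i, w i u • Dψ (c u) i) t, z⟫ = 0) ↔
      (∀ t ∈ I, ∀ i, deriv (w i) t +
        ∑ k, ∑ l, Γ (c t) i k l * deriv (fun τ => c τ k) t * w l t = 0) := by
  -- differentiability of the first derivative maps
  have hGdiff : ∀ k : Fin n, Differentiable ℝ (fun y => fderiv ℝ ψ y (Pi.single k 1)) := by
    intro k
    have h1 : ContDiff ℝ 1 (fderiv ℝ ψ) := by
      exact_mod_cast (contDiff_succ_iff_fderiv.mp
        (by exact_mod_cast hψ : ContDiff ℝ ((1:ℕ)+1) ψ)).2.2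
    exact (ContinuousLinearMap.apply ℝ (EuclideanSpace ℝ (Fin ν))
      ((Pi.single k 1 : Fin n → ℝ))).differentiable.comp (h1.differentiable one_ne_zero)
  have hcdiff : Differentiable ℝ c := hc.differentiable one_ne_zero
  -- expansion of a continuous linear map on a pi type
  have hLsum : ∀ (L : (Fin n → ℝ) →L[ℝ] EuclideanSpace ℝ (Fin ν)) (v : Fin n → ℝ),
      L v = ∑ j, v j • L ((Pi.single j 1 : Fin n → ℝ)) := by
    intro L v
    have hv : v = ∑ j, v j • (Pi.single j 1 : Fin n → ℝ) := by
      ext i; simp [Pi.single_apply]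
    conv_lhs => rw [hv]
    simp [map_smul]
  -- derivative of t ↦ Dψ (c t) k
  have hGc : ∀ (k : Fin n) (t : ℝ), HasDerivAt (fun u => Dψ (c u) k)
      (∑ j, deriv c t j • D2ψ (c t) j k) t := by
    intro k t
    have h0 : HasDerivAt (fun u => fderiv ℝ ψ (c u) (Pi.single k 1))
        (fderiv ℝ (fun y => fderiv ℝ ψ y (Pi.single k 1)) (c t) (deriv c t)) t :=
      (((hGdiff k) (c t)).hasFDerivAt.comp_hasDerivAt t ((hcdiff t).hasDerivAt))
    have h1 : fderiv ℝ (fun y => fderiv ℝ ψ y (Pi.single k 1)) (c t) (deriv c t)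
        = ∑ j, deriv c t j • D2ψ (c t) j k := by
      rw [hLsum]
      exact Finset.sum_congr rfl fun j _ => by rw [hD2]
    rw [h1] at h0
    have h2 : (fun u => Dψ (c u) k) = fun u => fderiv ℝ ψ (c u) (Pi.single k 1) := by
      funext u; rw [hD]
    rw [h2]; exact h0
  -- derivative of the field
  have hV : ∀ t : ℝ, HasDerivAt (fun u => ∑ i, w i u • Dψ (c u) i)
      (∑ i, (deriv (w i) t • Dψ (c t) i + w i t • ∑ j, deriv c t j • D2ψ (c t) j i)) t :=
    fun t => HasDerivAt.fun_sum fun i _ => by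
      have h := (hw i t).hasDerivAt.smul (hGc i t)
      rwa [add_comm] at h
  -- component derivatives of c
  have hck : ∀ (k : Fin n) (t : ℝ), deriv (fun τ => c τ k) t = deriv c t k := by
    intro k t
    have h3 := (ContinuousLinearMap.proj (R := ℝ) (φ := fun _ : Fin n => ℝ)
      k).hasFDerivAt.comp_hasDerivAt t (hcdiff t).hasDerivAt
    exact (by exact h3 : HasDerivAt (fun τ => c τ k) (deriv c t k) t).deriv
  -- symmetry of g
  have hgsymm : ∀ x i j, g x i j = g x j i := by
    intro x i j; rw [hg, hg, real_inner_comm]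
  -- main pointwise equivalence
  have key : ∀ t ∈ I,
      ((∀ z ∈ Submodule.span ℝ (Set.range (Dψ (c t))),
        ⟪deriv (fun u => ∑ i, w i u • Dψ (c u) i) t, z⟫ = 0) ↔
      (∀ i, deriv (w i) t +
        ∑ k, ∑ l, Γ (c t) i k l * deriv (fun τ => c τ k) t * w l t = 0)) := by
    intro t ht
    have hgx := hginv (c t) (hcU t ht)
    set v' := ∑ i, (deriv (w i) t • Dψ (c t) i + w i t • ∑ j, deriv c t j • D2ψ (c t) j i)
      with hv'
    have hdv : deriv (fun u => ∑ i, w i u • Dψ (c u) i) t = v' := (hV t).deriv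
    set a : Fin n → ℝ := fun j => ⟪v', Dψ (c t) j⟫ with ha
    -- inner products against the basis
    have haj : ∀ j, a j = (∑ m, deriv (w m) t * g (c t) m j)
        + ∑ m, ∑ k, ⟪Dψ (c t) j, D2ψ (c t) k m⟫ * deriv c t k * w m t := by
      intro j
      rw [ha]
      simp only [hv', sum_inner, inner_add_left, real_inner_smul_left,
        Finset.sum_add_distrib]
      congr 1
      · exact Finset.sum_congr rfl fun m _ => by rw [hg, real_inner_comm]
      · refine Finset.sum_congr rfl fun m _ => ?_
        rw [Finset.mul_sum]
        refine Finset.sum_congr rfl fun k _ => ?_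
        rw [real_inner_comm]
        ring
    -- covariant-derivative components in terms of a
    have hA : ∀ i, deriv (w i) t + ∑ k, ∑ l, Γ (c t) i k l * deriv c t k * w l t
        = ∑ j, ginv (c t) i j * a j := by
      intro i
      have hdel : ∑ j, ∑ m, ginv (c t) i j * (deriv (w m) t * g (c t) m j)
          = deriv (w i) t := by
        rw [Finset.sum_comm]
        have h4 : ∀ m, ∑ j, ginv (c t) i j * (deriv (w m) t * g (c t) m j)
            = deriv (w m) t * ((ginv (c t) * g (c t)) i m) := by
          intro m; rw [Matrix.mul_apply, Finset.mul_sum]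
          exact Finset.sum_congr rfl fun j _ => by rw [hgsymm _ m j]; ring
        simp only [h4, hgx.2, Matrix.one_apply, mul_ite, mul_one, mul_zero]
        simp
      have hsecond : ∑ j, ∑ m, ∑ k,
            ginv (c t) i j * (⟪Dψ (c t) j, D2ψ (c t) k m⟫ * deriv c t k * w m t)
          = ∑ k, ∑ l, Γ (c t) i k l * deriv c t k * w l t := by
        rw [Finset.sum_comm]
        rw [show (∑ k, ∑ l, Γ (c t) i k l * deriv c t k * w l t)
            = ∑ l, ∑ k, Γ (c t) i k l * deriv c t k * w l t from Finset.sum_comm]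
        refine Finset.sum_congr rfl fun m _ => ?_
        rw [Finset.sum_comm]
        refine Finset.sum_congr rfl fun k _ => ?_
        rw [hΓ, Finset.sum_mul, Finset.sum_mul]
        exact Finset.sum_congr rfl fun x _ => by ring
      symm
      calc ∑ j, ginv (c t) i j * a j
          = (∑ j, ∑ m, ginv (c t) i j * (deriv (w m) t * g (c t) m j))
            + ∑ j, ∑ m, ∑ k,
              ginv (c t) i j * (⟪Dψ (c t) j, D2ψ (c t) k m⟫ * deriv c t k * w m t) := by
            rw [← Finset.sum_add_distrib]
            refine Finset.sum_congr rfl fun j _ => ?_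
            rw [haj, mul_add, Finset.mul_sum, Finset.mul_sum]
            congr 1
            exact Finset.sum_congr rfl fun m _ => (Finset.mul_sum _ _ _)
        _ = deriv (w i) t + ∑ k, ∑ l, Γ (c t) i k l * deriv c t k * w l t := by
            rw [hdel, hsecond]
    -- a in terms of the covariant-derivative components
    have haA : ∀ j, a j = ∑ i, g (c t) j i *
        (deriv (w i) t + ∑ k, ∑ l, Γ (c t) i k l * deriv c t k * w l t) := by
      intro j
      simp only [hA, Finset.mul_sum]
      rw [Finset.sum_comm]
      have h5 : ∀ m, ∑ i, g (c t) j i * (ginv (c t) i m * a m)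
          = ((g (c t) * ginv (c t)) j m) * a m := by
        intro m; rw [Matrix.mul_apply, Finset.sum_mul]
        exact Finset.sum_congr rfl fun i _ => by ring
      symm
      simp only [h5, hgx.1, Matrix.one_apply, ite_mul, one_mul, zero_mul]
      simp
    constructor
    · intro H i
      have ha0 : ∀ j, a j = 0 := by
        intro j
        have := H (Dψ (c t) j) (Submodule.subset_span ⟨j, rfl⟩)
        rw [hdv] at this
        exact this
      simp only [hck]
      rw [hA]
      simp [ha0]
    · intro H z hz
      rw [hdv]
      have hH : ∀ i, deriv (w i) t
          + ∑ k, ∑ l, Γ (c t) i k l * deriv c t k * w l t = 0 := by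
        intro i; simpa only [hck] using H i
      have ha0 : ∀ j, a j = 0 := by
        intro j
        rw [haA j]
        simp [hH]
      induction hz using Submodule.span_induction with
      | mem z hzz =>
        obtain ⟨j, rfl⟩ := hzz
        exact ha0 j
      | zero => simp
      | add y z _ _ hy hz => rw [inner_add_right, hy, hz, add_zero]
      | smul r y _ hy => rw [real_inner_smul_right, hy, mul_zero]
  constructor
  · intro H t ht; exact (key t ht).mp (H t ht)
  · intro H t ht; exact (key t ht).mpr (H t ht)
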